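/- For every right-A-module endomorphism M ∈ C(G,H,A) one has ι(e_G)(δ) = δ and the function M(δ) takes all of its values in the right ideal A·e_H, i.e. M(δ) ∈ Fun_H(G, A·e_H); consequently the assignment ζ(M·ι(e_G)) := M(δ) is a well-defined map from the left ideal C(G,H,A)·ι(e_G) to Fun_H(G, A·e_H). -/

import Mathlib

open scoped BigOperators

section Setup
variable {G : Type} [Group G] [Fintype G] {H : Subgroup G} [Fintype H]
variable {A : Type} [Ring A] [Algebra ℂ A]

/-- `Fun_H(G,A)`: the `H`-equivariant `A`-valued functions on `G`,
as a right `A`-module (i.e. a module over `Aᵐᵒᵖ`). -/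
def FunH (φ : H →* Aˣ) : Submodule Aᵐᵒᵖ (G → A) where
  carrier := {f | ∀ (h : H) (g : G), f (↑h * g) = (φ h : A) * f g}
  add_mem' := by
    intro f g hf hg h x
    simp only [Pi.add_apply, hf h x, hg h x, mul_add]
  zero_mem' := by intro h x; simp
  smul_mem' := by
    intro a f hf h x
    simp only [Pi.smul_apply, MulOpposite.smul_eq_mul_unop, hf h x, mul_assoc]

variable (φ : H →* Aˣ)

/-- `ι(w)`, the endomorphism `f ↦ (g ↦ f (g * w))` of the right `A`-module `Fun_H(G,A)`. -/
def iota (w : G) : Module.End Aᵐᵒᵖ (FunH (G := G) φ) where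
  toFun f := ⟨fun g => (f : G → A) (g * w), fun h x => by
    simpa only [mul_assoc] using f.2 h (x * w)⟩
  map_add' f₁ f₂ := rfl
  map_smul' a f := rfl

/-- `ι(e_G)` where `e_G = |G|⁻¹ ∑_{g ∈ G} g` is the symmetrizing idempotent of `ℂG`. -/
noncomputable def iotaEG : Module.End Aᵐᵒᵖ (FunH (G := G) φ) :=
  (Fintype.card G : ℂ)⁻¹ • ∑ g : G, iota φ g

/-- The idempotent `e_H = |H|⁻¹ ∑_{h ∈ H} φ(h) ∈ A`. -/
noncomputable def eH : A := (Fintype.card H : ℂ)⁻¹ • ∑ h : H, (φ h : A)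

lemma phi_mul_eH (h : H) : (φ h : A) * eH φ = eH φ := by
  unfold eH
  rw [mul_smul_comm, Finset.mul_sum]
  congr 1
  exact Fintype.sum_equiv (Equiv.mulLeft h) _ _ (fun x => by
    simp [Equiv.mulLeft, ← Units.val_mul])

/-- The element `δ ∈ Fun_H(G,A)`, the constant function with value `e_H`. -/
noncomputable def delta : FunH (G := G) φ := ⟨fun _ => eH φ, fun h g => (phi_mul_eH φ h).symm⟩

/-- `η(f)`: the right `A`-module endomorphism `h ↦ (w ↦ f(w) ⬝ ∑_{g ∈ G} h(g))`. -/
def eta (f : FunH (G := G) φ) : Module.End Aᵐᵒᵖ (FunH (G := G) φ) where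
  toFun h := ⟨fun w => (f : G → A) w * ∑ g : G, (h : G → A) g, fun hh x => by
    simp only []
    rw [f.2 hh x, mul_assoc]⟩
  map_add' h₁ h₂ := by
    ext w
    simp [Finset.sum_add_distrib, mul_add]
  map_smul' a h := by
    ext w
    simp [MulOpposite.smul_eq_mul_unop, ← Finset.sum_mul, mul_assoc]

/-- Right multiplication by a central element `z`, as an endomorphism of `Fun_H(G,A)`. -/
def rmul (z : A) (hz : z ∈ Set.center A) : Module.End Aᵐᵒᵖ (FunH (G := G) φ) where
  toFun f := ⟨fun w => (f : G → A) w * z, fun h x => by simp only []; rw [f.2 h x, mul_assoc]⟩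
  map_add' f₁ f₂ := by ext w; simp [add_mul]
  map_smul' a f := by
    ext w
    simp only [Submodule.coe_smul, Pi.smul_apply, MulOpposite.smul_eq_mul_unop,
      mul_assoc]
    rw [hz.comm]; rfl
  
end Setup

section Statements
variable {G : Type} [Group G] [Fintype G] {H : Subgroup G} [Fintype H]
variable {A : Type} [Ring A] [Algebra ℂ A]

/-- The set of functions in `Fun_H(G,A)` all of whose values lie in the
right ideal `A·e_H`, i.e. `Fun_H(G, A·e_H)`. -/
def FunHeSet (φ : H →* Aˣ) : Set (FunH (G := G) φ) :=
  {f | ∀ g : G, ∃ a : A, (f : G → A) g = a * eH φ}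


lemma eH_idem (φ : H →* Aˣ) : eH φ * eH φ = eH φ := by
  have hc : (Fintype.card H : ℂ) ≠ 0 := Nat.cast_ne_zero.mpr Fintype.card_ne_zero
  nth_rewrite 1 [eH]
  rw [smul_mul_assoc, Finset.sum_mul]
  have hs : ∀ h ∈ Finset.univ, (φ h : A) * eH φ = eH φ := fun h _ => phi_mul_eH φ h
  rw [Finset.sum_congr rfl hs, Finset.sum_const, Finset.card_univ, ← Nat.cast_smul_eq_nsmul ℂ, smul_smul,
    inv_mul_cancel₀ hc, one_smul]

lemma delta_smul (φ : H →* Aˣ) :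
    (MulOpposite.op (eH φ)) • delta (G := G) φ = delta φ := by
  apply Subtype.ext
  funext g
  show eH φ • (delta (G := G) φ : G → A) g = _
  simp [delta, MulOpposite.smul_eq_mul_unop, eH_idem]

lemma iotaEG_delta (φ : H →* Aˣ) : iotaEG φ (delta (G := G) φ) = delta φ := by
  have hc : (Fintype.card G : ℂ) ≠ 0 := Nat.cast_ne_zero.mpr Fintype.card_ne_zero
  unfold iotaEG
  rw [LinearMap.smul_apply, LinearMap.sum_apply]
  have h : ∀ g ∈ Finset.univ, iota φ g (delta (G := G) φ) = delta φ := fun g _ => rfl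
  rw [Finset.sum_congr rfl h, Finset.sum_const, Finset.card_univ,
    ← Nat.cast_smul_eq_nsmul ℂ, smul_smul, inv_mul_cancel₀ hc, one_smul]

/-- `ι(e_G)(δ) = δ`; for every `M ∈ C(G,H,A)` the function `M(δ)`
takes all its values in `A·e_H`; and consequently `ζ(M·ι(e_G)) := M(δ)` is
well-defined on the left ideal `C(G,H,A)·ι(e_G)`. -/
theorem statement0 (φ : H →* Aˣ) :
    iotaEG φ (delta φ) = delta φ ∧
    (∀ M : Module.End Aᵐᵒᵖ (FunH (G := G) φ), M (delta φ) ∈ FunHeSet φ) ∧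
    (∀ M M' : Module.End Aᵐᵒᵖ (FunH (G := G) φ),
      M * iotaEG φ = M' * iotaEG φ → M (delta φ) = M' (delta φ)) := by
  refine ⟨iotaEG_delta φ, ?_, ?_⟩
  · intro M g
    refine ⟨(M (delta φ) : G → A) g, ?_⟩
    conv_lhs => rw [← delta_smul φ, map_smul]
    rfl
  · intro M M' hMM
    have := congrArg (fun N : Module.End Aᵐᵒᵖ (FunH (G := G) φ) => N (delta φ)) hMM
    simpa [Module.End.mul_apply, iotaEG_delta] using this

end Statements
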